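/- Let d ≥ 2, φ_0 ∈ (0, π/2], and let D : (0,φ_0] → [1,∞) be a continuous decreasing function. Assume that for every φ ∈ (0,φ_0] there exists a cover of S^d by finitely many spherical caps all of geodesic radius φ whose density (the sum of the normalized volumes of the caps) is at most D(φ). Then for every n ≥ D(φ_0)/V(φ_0) one has n·disp_C(n,d) ≤ D(φ(n)). -/

import Mathlib

open scoped Real InnerProductSpace
open MeasureTheory Filter
open scoped Pointwise ENNReal Topology

noncomputable section

/-- The `d`-dimensional unit sphere `S^d`, as a subtype of `ℝ^{d+1}`. -/
abbrev Sph (d : ℕ) := Metric.sphere (0 : EuclideanSpace ℝ (Fin (d + 1))) 1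

/-- Geodesic distance `ρ(x,y) = arccos⟨x,y⟩` on the sphere. -/
def geoDist {d : ℕ} (x y : Sph d) : ℝ :=
  Real.arccos ⟪(x : EuclideanSpace ℝ (Fin (d + 1))), (y : EuclideanSpace ℝ (Fin (d + 1)))⟫_ℝ

/-- Spherical cap (geodesic ball) with center `x` and geodesic radius `φ`. -/
def cap {d : ℕ} (x : Sph d) (φ : ℝ) : Set (Sph d) :=
  {y : Sph d | geoDist x y ≤ φ}

/-- The normalized Lebesgue (surface) measure `σ` on the sphere `S^d`. -/
def sphMeasure (d : ℕ) : Measure (Sph d) :=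
  ((volume : Measure (EuclideanSpace ℝ (Fin (d + 1)))).toSphere Set.univ)⁻¹ •
    (volume : Measure (EuclideanSpace ℝ (Fin (d + 1)))).toSphere

/-- Spherical cap dispersion `disp_C(P)` of a point set `P ⊆ S^d`:
the supremum of `σ(C)` over caps `C` avoiding `P`. -/
def capDisp {d : ℕ} (P : Set (Sph d)) : ℝ :=
  sSup {v : ℝ | ∃ x : Sph d, ∃ φ ∈ Set.Icc (0 : ℝ) π,
    cap x φ ∩ P = ∅ ∧ v = (sphMeasure d (cap x φ)).toReal}

/-- Minimal spherical cap dispersion `disp_C(n, d)`: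
the infimum of `disp_C({x_1, …, x_n})` over `x_1, …, x_n ∈ S^d`. -/
def minCapDisp (d n : ℕ) : ℝ :=
  sInf {v : ℝ | ∃ x : Fin n → Sph d, v = capDisp (Set.range x)}

/-- Normalized volume `V(φ)` of a spherical cap of geodesic radius `φ`
(centered at the first standard basis vector). -/
def capVol (d : ℕ) (φ : ℝ) : ℝ :=
  (sphMeasure d (cap (⟨EuclideanSpace.single 0 1, by
    simp [EuclideanSpace.norm_single]⟩ : Sph d) φ)).toReal

/-- Minimal geodesic covering radius `φ(n)` of `S^d` with `n` caps. -/
def covRad (d n : ℕ) : ℝ :=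
  sInf {φ : ℝ | 0 < φ ∧ ∃ x : Fin n → Sph d, (⋃ i, cap (x i) φ) = Set.univ}

/-- Minimal spherical covering density `dens(n, d)`:
the infimal total normalized volume of `n` equal caps covering `S^d`. -/
def minDens (d n : ℕ) : ℝ :=
  sInf {s : ℝ | ∃ φ ∈ Set.Ioc (0 : ℝ) π, ∃ x : Fin n → Sph d,
    (⋃ i, cap (x i) φ) = Set.univ ∧
    s = ∑ i : Fin n, (sphMeasure d (cap (x i) φ)).toReal}

namespace SphAux

variable {d : ℕ}

local notation "E" => EuclideanSpace ℝ (Fin (d + 1))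

/-- Base point on the sphere. -/
def basePt (d : ℕ) : Sph d :=
  ⟨EuclideanSpace.single 0 1, by simp [EuclideanSpace.norm_single]⟩

lemma norm_coe (x : Sph d) : ‖(x : E)‖ = 1 :=
  mem_sphere_zero_iff_norm.mp x.2

lemma abs_inner_le (x y : Sph d) : |⟪(x : E), (y : E)⟫_ℝ| ≤ 1 := by
  have h := abs_real_inner_le_norm (x : E) (y : E)
  rwa [norm_coe, norm_coe, one_mul] at h

lemma geoDist_symm (x y : Sph d) : geoDist x y = geoDist y x := by
  unfold geoDist; rw [real_inner_comm]

lemma geoDist_nonneg (x y : Sph d) : 0 ≤ geoDist x y := Real.arccos_nonneg _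

lemma geoDist_self (x : Sph d) : geoDist x x = 0 := by
  unfold geoDist
  rw [real_inner_self_eq_norm_mul_norm, norm_coe, one_mul, Real.arccos_one]

lemma continuous_geoDist (x : Sph d) : Continuous fun y : Sph d => geoDist x y :=
  Real.continuous_arccos.comp (continuous_const.inner continuous_subtype_val)

lemma measurableSet_cap (x : Sph d) (φ : ℝ) : MeasurableSet (cap x φ) :=
  (isClosed_Iic.preimage (continuous_geoDist x)).measurableSet

lemma cap_mono (x : Sph d) {a b : ℝ} (h : a ≤ b) : cap x a ⊆ cap x b :=
  fun _ hy => le_trans hy h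

lemma measurableSet_slice (x : Sph d) (t : ℝ) :
    MeasurableSet {y : Sph d | ⟪(x : E), (y : E)⟫_ℝ = t} :=
  ((isClosed_singleton (x := t)).preimage
    (continuous_const.inner continuous_subtype_val)).measurableSet

lemma vol_preimage_iso (e : E ≃ₗᵢ[ℝ] E) (A : Set E) :
    volume (⇑e ⁻¹' A) = volume A := by
  have h : MeasurePreserving (⇑(e.toHomeomorph.toMeasurableEquiv)) volume volume :=
    e.measurePreserving
  exact h.measure_preimage_equiv A

/-- The sphere self-map induced by a linear isometry equivalence. -/
def sMap (e : E ≃ₗᵢ[ℝ] E) (y : Sph d) : Sph d :=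
  ⟨e y, by rw [mem_sphere_zero_iff_norm, e.norm_map]; exact norm_coe y⟩

lemma continuous_sMap (e : E ≃ₗᵢ[ℝ] E) : Continuous (sMap (d := d) e) :=
  Continuous.subtype_mk (e.continuous.comp continuous_subtype_val) _

lemma coe_image_preimage (e : E ≃ₗᵢ[ℝ] E) (s : Set (Sph d)) :
    (Subtype.val '' (sMap e ⁻¹' s) : Set E) = ⇑e ⁻¹' (Subtype.val '' s) := by
  ext v
  constructor
  · rintro ⟨y, hy, rfl⟩
    exact ⟨sMap e y, hy, rfl⟩
  · rintro ⟨z, hz, hzv⟩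
    have hnv : ‖v‖ = 1 := by
      have h1 := norm_coe z
      rw [hzv, e.norm_map] at h1
      exact h1
    refine ⟨⟨v, mem_sphere_zero_iff_norm.mpr hnv⟩, ?_, rfl⟩
    show sMap e ⟨v, _⟩ ∈ s
    have : sMap e ⟨v, mem_sphere_zero_iff_norm.mpr hnv⟩ = z := Subtype.ext hzv.symm
    rw [this]; exact hz

lemma smul_preimage (e : E ≃ₗᵢ[ℝ] E) (A : Set E) :
    Set.Ioo (0 : ℝ) 1 • (⇑e ⁻¹' A) = ⇑e ⁻¹' (Set.Ioo (0 : ℝ) 1 • A) := by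
  ext v
  simp only [Set.mem_smul, Set.mem_preimage]
  constructor
  · rintro ⟨r, hr, w, hw, rfl⟩
    refine ⟨r, hr, e w, hw, ?_⟩
    rw [← _root_.map_smul]
  · rintro ⟨r, hr, b, hb, hbv⟩
    refine ⟨r, hr, e.symm b, by simpa using hb, ?_⟩
    apply e.injective
    rw [_root_.map_smul]
    simp [hbv]

lemma toSphere_preimage (e : E ≃ₗᵢ[ℝ] E) (s : Set (Sph d)) (hs : MeasurableSet s) :
    (volume : Measure E).toSphere (sMap e ⁻¹' s) = (volume : Measure E).toSphere s := by
  rw [Measure.toSphere_apply' _ (hs.preimage (continuous_sMap e).measurable),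
    Measure.toSphere_apply' _ hs, coe_image_preimage, smul_preimage, vol_preimage_iso]

lemma sphMeasure_preimage (e : E ≃ₗᵢ[ℝ] E) (s : Set (Sph d)) (hs : MeasurableSet s) :
    sphMeasure d (sMap e ⁻¹' s) = sphMeasure d s := by
  unfold sphMeasure
  rw [Measure.smul_apply, Measure.smul_apply, toSphere_preimage e s hs]

lemma exists_iso (x y : Sph d) : ∃ e : E ≃ₗᵢ[ℝ] E, e (x : E) = (y : E) := by
  rcases eq_or_ne (x : E) (y : E) with h | h
  · exact ⟨LinearIsometryEquiv.refl ℝ _, h⟩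
  · exact ⟨Submodule.reflection (Submodule.span ℝ {(x : E) - (y : E)})ᗮ,
      Submodule.reflection_sub (by rw [norm_coe, norm_coe])⟩

lemma sphMeasure_cap_congr (x y : Sph d) (φ : ℝ) :
    sphMeasure d (cap x φ) = sphMeasure d (cap y φ) := by
  obtain ⟨e, he⟩ := exists_iso x y
  have hcap : cap x φ = sMap e ⁻¹' (cap y φ) := by
    ext z
    show geoDist x z ≤ φ ↔ geoDist y (sMap e z) ≤ φ
    unfold geoDist
    have h1 : ⟪(y : E), ((sMap e z : Sph d) : E)⟫_ℝ = ⟪(x : E), (z : E)⟫_ℝ := by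
      rw [← he]; exact e.inner_map_map _ _
    rw [h1]
  rw [hcap, sphMeasure_preimage e _ (measurableSet_cap y φ)]

lemma vol_cone_null {t : ℝ} (ht : t ∈ Set.Ioo (-1 : ℝ) 1) :
    volume {v : E | v 0 = t * ‖v‖} = 0 := by
  have hnorm : ∀ v : E, ‖v‖ = Real.sqrt (∑ i, v i ^ 2) := fun v => by
    rw [EuclideanSpace.norm_eq]
    congr 1
    exact Finset.sum_congr rfl fun i _ => by rw [Real.norm_eq_abs, sq_abs]
  set f := (MeasurableEquiv.toLp 2 (Fin (d + 1) → ℝ)).symm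
  have mp := EuclideanSpace.volume_preserving_symm_measurableEquiv_toLp (Fin (d + 1))
  set s : Set (Fin (d + 1) → ℝ) :=
    {g : Fin (d + 1) → ℝ | g 0 = t * Real.sqrt (∑ i, g i ^ 2)} with hs
  have h1 : {v : E | v 0 = t * ‖v‖} = ⇑f ⁻¹' s := by
    ext v
    simp only [Set.mem_setOf_eq, Set.mem_preimage, hs]
    rw [hnorm v]
    exact Iff.rfl
  rw [h1, mp.measure_preimage_equiv s]
  -- now in the pi space
  set e2 := MeasurableEquiv.piFinSuccAbove (fun _ : Fin (d + 1) => ℝ) 0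
  have mp2 := volume_preserving_piFinSuccAbove (fun _ : Fin (d + 1) => ℝ) 0
  set T : Set (ℝ × (Fin d → ℝ)) :=
    {p : ℝ × (Fin d → ℝ) | p.1 = t * Real.sqrt (p.1 ^ 2 + ∑ j, p.2 j ^ 2)} with hT
  have h2 : s = ⇑e2 ⁻¹' T := by
    ext g
    simp only [Set.mem_setOf_eq, Set.mem_preimage, hT, hs]
    have hsum : ∑ i, g i ^ 2 = g 0 ^ 2 + ∑ j : Fin d, g ((0 : Fin (d + 1)).succAbove j) ^ 2 :=
      Fin.sum_univ_succAbove (fun i => g i ^ 2) 0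
    have he1 : (e2 g).1 = g 0 := rfl
    have he2 : ∀ j, (e2 g).2 j = g ((0 : Fin (d + 1)).succAbove j) := fun j => rfl
    rw [he1, hsum]
    exact Iff.rfl
  have hTmeas : MeasurableSet T := by
    have hcont : Continuous fun p : ℝ × (Fin d → ℝ) =>
        t * Real.sqrt (p.1 ^ 2 + ∑ j, p.2 j ^ 2) := by
      refine continuous_const.mul (Real.continuous_sqrt.comp ?_)
      exact ((continuous_fst.pow 2).add
        (continuous_finset_sum _ fun j _ => ((continuous_apply j).comp continuous_snd).pow 2))
    exact (isClosed_eq continuous_fst hcont).measurableSet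
  rw [h2, mp2.measure_preimage_equiv T]
  rw [Measure.volume_eq_prod, Measure.prod_apply_symm hTmeas]
  have hslice : ∀ g : Fin d → ℝ, volume ((fun a => (a, g)) ⁻¹' T) = 0 := by
    intro g
    set c := ∑ j, g j ^ 2 with hc
    have hc0 : 0 ≤ c := Finset.sum_nonneg fun j _ => sq_nonneg _
    have ht2 : 0 < 1 - t ^ 2 := by nlinarith [ht.1, ht.2]
    set r := Real.sqrt (t ^ 2 * c / (1 - t ^ 2)) with hr
    have hsub : ((fun a => (a, g)) ⁻¹' T) ⊆ {r, -r} := by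
      intro a ha
      simp only [Set.mem_preimage, Set.mem_setOf_eq, hT] at ha
      have hsq : a ^ 2 = t ^ 2 * (a ^ 2 + c) := by
        have hh : a ^ 2 = (t * Real.sqrt (a ^ 2 + c)) ^ 2 := by rw [← ha]
        rwa [mul_pow, Real.sq_sqrt (add_nonneg (sq_nonneg a) hc0)] at hh
      have har : a ^ 2 = r ^ 2 := by
        have hr2 : r ^ 2 = t ^ 2 * c / (1 - t ^ 2) :=
          Real.sq_sqrt (by positivity)
        rw [hr2]
        field_simp
        nlinarith [hsq]
      rcases sq_eq_sq_iff_eq_or_eq_neg.mp har with h | h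
      · exact Set.mem_insert_iff.mpr (Or.inl h)
      · exact Set.mem_insert_iff.mpr (Or.inr h)
    refine measure_mono_null hsub ?_
    rw [Set.insert_eq]
    exact measure_union_null Real.volume_singleton Real.volume_singleton
  calc (∫⁻ g, volume ((fun a => (a, g)) ⁻¹' T) ∂volume)
      = ∫⁻ _, 0 ∂(volume : Measure (Fin d → ℝ)) := by
        congr 1; funext g; exact hslice g
    _ = 0 := lintegral_zero

lemma slice_null (x : Sph d) {t : ℝ} (ht : t ∈ Set.Ioo (-1 : ℝ) 1) :
    sphMeasure d {y : Sph d | ⟪(x : E), (y : E)⟫_ℝ = t} = 0 := by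
  obtain ⟨e, he⟩ := exists_iso x (basePt d)
  have hset : {y : Sph d | ⟪(x : E), (y : E)⟫_ℝ = t}
      = sMap e ⁻¹' {y : Sph d | ⟪((basePt d : Sph d) : E), (y : E)⟫_ℝ = t} := by
    ext z
    simp only [Set.mem_setOf_eq, Set.mem_preimage]
    have h1 : ⟪((basePt d : Sph d) : E), ((sMap e z : Sph d) : E)⟫_ℝ = ⟪(x : E), (z : E)⟫_ℝ := by
      rw [← he]; exact e.inner_map_map _ _
    rw [h1]
  rw [hset, sphMeasure_preimage e _ (measurableSet_slice _ t)]
  unfold sphMeasure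
  rw [Measure.smul_apply]
  have h0 : (volume : Measure E).toSphere
      {y : Sph d | ⟪((basePt d : Sph d) : E), (y : E)⟫_ℝ = t} = 0 := by
    rw [Measure.toSphere_apply' _ (measurableSet_slice _ t)]
    have hsub : Set.Ioo (0 : ℝ) 1 •
        (Subtype.val '' {y : Sph d | ⟪((basePt d : Sph d) : E), (y : E)⟫_ℝ = t})
        ⊆ {v : E | v 0 = t * ‖v‖} := by
      intro v hv
      rw [Set.mem_smul] at hv
      obtain ⟨ρ, hρ, w, hw, rfl⟩ := hv
      obtain ⟨y, hy, rfl⟩ := hw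
      have hy0 : (y : E) 0 = t := by
        simpa [basePt, EuclideanSpace.inner_single_left] using hy
      show (ρ • (y : E)) 0 = t * ‖ρ • (y : E)‖
      rw [PiLp.smul_apply, smul_eq_mul, norm_smul, norm_coe, Real.norm_eq_abs,
        abs_of_pos hρ.1, mul_one, hy0]
      ring
    rw [measure_mono_null hsub (vol_cone_null ht), mul_zero]
  rw [h0, smul_eq_mul, mul_zero]

lemma toSphere_univ_ne_zero : (volume : Measure E).toSphere Set.univ ≠ 0 := by
  rw [Measure.toSphere_apply_univ]
  refine mul_ne_zero ?_ ?_
  · simp [finrank_euclideanSpace_fin]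
  · exact (Metric.measure_ball_pos volume 0 one_pos).ne'

lemma toSphere_univ_ne_top : (volume : Measure E).toSphere Set.univ ≠ ⊤ := measure_ne_top _ _

lemma sphMeasure_univ : sphMeasure d Set.univ = 1 := by
  unfold sphMeasure
  rw [Measure.smul_apply, smul_eq_mul,
    ENNReal.inv_mul_cancel toSphere_univ_ne_zero toSphere_univ_ne_top]

lemma sphMeasure_le_one (s : Set (Sph d)) : sphMeasure d s ≤ 1 :=
  (sphMeasure_univ (d := d)) ▸ measure_mono (Set.subset_univ s)

lemma sphMeasure_ne_top (s : Set (Sph d)) : sphMeasure d s ≠ ⊤ :=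
  ne_top_of_le_ne_top ENNReal.one_ne_top (sphMeasure_le_one s)

lemma capVol_def (φ : ℝ) : capVol d φ = (sphMeasure d (cap (basePt d) φ)).toReal := rfl

lemma capVol_eq (x : Sph d) (φ : ℝ) : (sphMeasure d (cap x φ)).toReal = capVol d φ := by
  rw [capVol_def, sphMeasure_cap_congr x (basePt d)]

lemma capVol_nonneg (φ : ℝ) : 0 ≤ capVol d φ := ENNReal.toReal_nonneg

lemma capVol_mono : Monotone (capVol d) := fun a b h =>
  ENNReal.toReal_mono (sphMeasure_ne_top _) (measure_mono (cap_mono _ h))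

lemma capVol_le_one (φ : ℝ) : capVol d φ ≤ 1 := by
  have h := ENNReal.toReal_mono ENNReal.one_ne_top
    (sphMeasure_le_one (cap (basePt d) φ))
  simpa [capVol_def] using h

lemma cover_sum_eq {m : ℕ} {φ : ℝ} (x : Fin m → Sph d) :
    ∑ i : Fin m, (sphMeasure d (cap (x i) φ)).toReal = (m : ℝ) * capVol d φ := by
  rw [Finset.sum_congr rfl fun i _ => capVol_eq (x i) φ, Finset.sum_const,
    Finset.card_univ, Fintype.card_fin, nsmul_eq_mul]

lemma cover_ineq {m : ℕ} {φ : ℝ} (x : Fin m → Sph d)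
    (hx : (⋃ i, cap (x i) φ) = Set.univ) : 1 ≤ (m : ℝ) * capVol d φ := by
  have h1 : (1 : ℝ≥0∞) ≤ ∑ i, sphMeasure d (cap (x i) φ) := by
    calc (1 : ℝ≥0∞) = sphMeasure d Set.univ := sphMeasure_univ.symm
      _ = sphMeasure d (⋃ i, cap (x i) φ) := by rw [hx]
      _ ≤ ∑ i, sphMeasure d (cap (x i) φ) := measure_iUnion_fintype_le _ _
  have hfin : (∑ i, sphMeasure d (cap (x i) φ)) ≠ ⊤ :=
    ENNReal.sum_ne_top.mpr fun i _ => sphMeasure_ne_top _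
  have h2 := ENNReal.toReal_mono hfin h1
  rw [ENNReal.toReal_one, ENNReal.toReal_sum (fun i _ => sphMeasure_ne_top _),
    cover_sum_eq] at h2
  exact h2

lemma extend_cover {m n : ℕ} {φ : ℝ} (hmn : m ≤ n) (hm : 0 < m) (x : Fin m → Sph d)
    (hx : (⋃ i, cap (x i) φ) = Set.univ) :
    ∃ x' : Fin n → Sph d, (⋃ i, cap (x' i) φ) = Set.univ := by
  refine ⟨fun i => x ⟨i.val % m, Nat.mod_lt _ hm⟩, ?_⟩
  apply Set.eq_univ_iff_forall.mpr
  intro z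
  have hz : z ∈ ⋃ i, cap (x i) φ := hx ▸ Set.mem_univ z
  rw [Set.mem_iUnion] at hz
  obtain ⟨j, hj⟩ := hz
  rw [Set.mem_iUnion]
  refine ⟨⟨j.val, lt_of_lt_of_le j.isLt hmn⟩, ?_⟩
  simpa only [Nat.mod_eq_of_lt j.isLt, Fin.eta] using hj

lemma capDisp_nonneg (P : Set (Sph d)) : 0 ≤ capDisp P := by
  apply Real.sSup_nonneg
  rintro v ⟨x, φ, _, _, rfl⟩
  exact ENNReal.toReal_nonneg

lemma capDisp_le {n : ℕ} {φ : ℝ} (x : Fin n → Sph d)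
    (hx : (⋃ i, cap (x i) φ) = Set.univ) :
    capDisp (Set.range x) ≤ capVol d φ := by
  apply Real.sSup_le _ (capVol_nonneg φ)
  rintro v ⟨z, ψ, hψ, hempty, rfl⟩
  have hz : z ∈ ⋃ i, cap (x i) φ := hx ▸ Set.mem_univ z
  rw [Set.mem_iUnion] at hz
  obtain ⟨i, hi⟩ := hz
  have hψφ : ψ ≤ φ := by
    by_contra hlt
    push_neg at hlt
    have hxin : x i ∈ cap z ψ := by
      show geoDist z (x i) ≤ ψ
      rw [geoDist_symm]
      exact le_trans hi hlt.le
    have hmem : x i ∈ cap z ψ ∩ Set.range x := ⟨hxin, Set.mem_range_self i⟩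
    rw [hempty] at hmem
    exact hmem
  calc (sphMeasure d (cap z ψ)).toReal
      ≤ (sphMeasure d (cap z φ)).toReal :=
        ENNReal.toReal_mono (sphMeasure_ne_top _) (measure_mono (cap_mono _ hψφ))
    _ = capVol d φ := capVol_eq _ _

lemma minCapDisp_le {n : ℕ} {φ : ℝ} (x : Fin n → Sph d)
    (hx : (⋃ i, cap (x i) φ) = Set.univ) :
    minCapDisp d n ≤ capVol d φ := by
  refine le_trans (csInf_le ⟨0, ?_⟩ ⟨x, rfl⟩) (capDisp_le x hx)
  rintro v ⟨y, rfl⟩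
  exact capDisp_nonneg _

lemma iInter_cap (x : Sph d) (τ : ℝ) :
    (⋂ k : ℕ, cap x (τ + 1 / ((k : ℝ) + 1))) = cap x τ := by
  ext y
  simp only [Set.mem_iInter]
  constructor
  · intro h
    show geoDist x y ≤ τ
    refine le_of_forall_pos_le_add fun ε hε => ?_
    obtain ⟨k, hk⟩ := exists_nat_one_div_lt hε
    exact le_trans (h k) (by linarith)
  · intro h k
    show geoDist x y ≤ τ + 1 / ((k : ℝ) + 1)
    have hp : (0:ℝ) < 1 / ((k : ℝ) + 1) := by positivity
    exact le_trans h (by linarith)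

lemma iUnion_cap (x : Sph d) {τ : ℝ} (hτ : 0 < τ) :
    (⋃ k : ℕ, cap x (τ - τ / ((k : ℝ) + 2))) = {y : Sph d | geoDist x y < τ} := by
  ext y
  simp only [Set.mem_iUnion, Set.mem_setOf_eq]
  constructor
  · rintro ⟨k, hk⟩
    have h1 : 0 < τ / ((k : ℝ) + 2) := by positivity
    have h2 : geoDist x y ≤ τ - τ / ((k : ℝ) + 2) := hk
    linarith
  · intro h
    have hpos : 0 < (τ - geoDist x y) / τ := div_pos (by linarith) hτ
    obtain ⟨k, hk⟩ := exists_nat_one_div_lt hpos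
    refine ⟨k, ?_⟩
    show geoDist x y ≤ τ - τ / ((k : ℝ) + 2)
    have h1 : τ / ((k : ℝ) + 2) ≤ τ * (1 / ((k : ℝ) + 1)) := by
      rw [div_eq_mul_one_div]
      exact mul_le_mul_of_nonneg_left
        (one_div_le_one_div_of_le (by positivity) (by linarith)) hτ.le
    have h2 : τ * (1 / ((k : ℝ) + 1)) < τ * ((τ - geoDist x y) / τ) := by
      exact mul_lt_mul_of_pos_left hk hτ
    have h3 : τ * ((τ - geoDist x y) / τ) = τ - geoDist x y := by
      field_simp
    linarith

lemma boundary_subset_slice (x : Sph d) (φ : ℝ) :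
    {y : Sph d | geoDist x y = φ} ⊆ {y : Sph d | ⟪(x : E), (y : E)⟫_ℝ = Real.cos φ} := by
  intro y hy
  have hb := abs_le.mp (abs_inner_le x y)
  show ⟪(x : E), (y : E)⟫_ℝ = Real.cos φ
  rw [← hy]
  exact (Real.cos_arccos hb.1 hb.2).symm

lemma cos_mem_Ioo {τ : ℝ} (h0 : 0 < τ) (h2 : τ ≤ π / 2) :
    Real.cos τ ∈ Set.Ioo (-1 : ℝ) 1 := by
  have hπ := Real.pi_pos
  constructor
  · have h := Real.cos_nonneg_of_mem_Icc ⟨by linarith, h2⟩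
    linarith
  · have h := Real.strictAntiOn_cos ⟨le_rfl, hπ.le⟩ ⟨h0.le, by linarith⟩ h0
    simpa [Real.cos_zero] using h

lemma sphMeasure_open_eq (x : Sph d) {τ : ℝ} (h0 : 0 < τ) (h2 : τ ≤ π / 2) :
    sphMeasure d {y : Sph d | geoDist x y < τ} = sphMeasure d (cap x τ) := by
  have hsub1 : {y : Sph d | geoDist x y < τ} ⊆ cap x τ :=
    fun y hy => show geoDist x y ≤ τ from le_of_lt hy
  refine le_antisymm (measure_mono hsub1) ?_
  have hbd : sphMeasure d {y : Sph d | geoDist x y = τ} = 0 :=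
    measure_mono_null (boundary_subset_slice x τ) (slice_null x (cos_mem_Ioo h0 h2))
  calc sphMeasure d (cap x τ)
      ≤ sphMeasure d ({y : Sph d | geoDist x y < τ} ∪ {y : Sph d | geoDist x y = τ}) :=
        measure_mono (fun y hy => by
          have h' : geoDist x y ≤ τ := hy
          rcases lt_or_eq_of_le h' with h | h
          · exact Set.mem_union_left _ h
          · exact Set.mem_union_right _ h)
    _ ≤ sphMeasure d {y : Sph d | geoDist x y < τ}
        + sphMeasure d {y : Sph d | geoDist x y = τ} := measure_union_le _ _
    _ = sphMeasure d {y : Sph d | geoDist x y < τ} := by rw [hbd, add_zero]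

lemma tendsto_capVol_right (τ : ℝ) :
    Tendsto (fun k : ℕ => capVol d (τ + 1 / ((k : ℝ) + 1))) atTop (𝓝 (capVol d τ)) := by
  have h1 : Tendsto (fun k : ℕ => sphMeasure d (cap (basePt d) (τ + 1 / ((k : ℝ) + 1))))
      atTop (𝓝 (sphMeasure d (cap (basePt d) τ))) := by
    have h := tendsto_measure_iInter_atTop (μ := sphMeasure d)
      (s := fun k : ℕ => cap (basePt d) (τ + 1 / ((k : ℝ) + 1)))
      (fun k => (measurableSet_cap _ _).nullMeasurableSet)
      (fun k l hkl => cap_mono _ (by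
        have hkl' : (k : ℝ) ≤ l := Nat.cast_le.mpr hkl
        have : (1 : ℝ) / ((l : ℝ) + 1) ≤ 1 / ((k : ℝ) + 1) :=
          one_div_le_one_div_of_le (by positivity) (by linarith)
        linarith))
      ⟨0, sphMeasure_ne_top _⟩
    rwa [iInter_cap] at h
  have h2 := (ENNReal.tendsto_toReal (sphMeasure_ne_top (cap (basePt d) τ))).comp h1
  simpa only [Function.comp_def, capVol_def] using h2

lemma tendsto_capVol_left {τ : ℝ} (h0 : 0 < τ) (h2 : τ ≤ π / 2) :
    Tendsto (fun k : ℕ => capVol d (τ - τ / ((k : ℝ) + 2))) atTop (𝓝 (capVol d τ)) := by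
  have h1 : Tendsto (fun k : ℕ => sphMeasure d (cap (basePt d) (τ - τ / ((k : ℝ) + 2))))
      atTop (𝓝 (sphMeasure d (cap (basePt d) τ))) := by
    have h := tendsto_measure_iUnion_atTop (μ := sphMeasure d)
      (s := fun k : ℕ => cap (basePt d) (τ - τ / ((k : ℝ) + 2)))
      (fun k l hkl => cap_mono _ (by
        have hkl' : (k : ℝ) ≤ l := Nat.cast_le.mpr hkl
        have : τ / ((l : ℝ) + 2) ≤ τ / ((k : ℝ) + 2) := by gcongr
        linarith))
    rwa [iUnion_cap _ h0, sphMeasure_open_eq _ h0 h2] at h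
  have h2' := (ENNReal.tendsto_toReal (sphMeasure_ne_top (cap (basePt d) τ))).comp h1
  simpa only [Function.comp_def, capVol_def] using h2'

lemma cap_zero (x : Sph d) : cap x 0 = {x} := by
  ext y
  simp only [Set.mem_singleton_iff]
  show geoDist x y ≤ 0 ↔ y = x
  constructor
  · intro h
    have h0 : geoDist x y = 0 := le_antisymm h (geoDist_nonneg x y)
    have h1 : (1 : ℝ) ≤ ⟪(x : E), (y : E)⟫_ℝ := Real.arccos_eq_zero.mp h0
    have h2 : ⟪(x : E), (y : E)⟫_ℝ = 1 :=
      le_antisymm ((abs_le.mp (abs_inner_le x y)).2) h1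
    have h3 := (inner_eq_one_iff_of_norm_eq_one (norm_coe x) (norm_coe y)).mp h2
    exact Subtype.ext h3.symm
  · intro h
    subst h
    rw [geoDist_self]

lemma basePt_singleton_null (hd : 1 ≤ d) : sphMeasure d {basePt d} = 0 := by
  have hj : ¬((0 : Fin (d + 1)) = (⟨1, by omega⟩ : Fin (d + 1))) := by
    simp [Fin.ext_iff]
  set z : Sph d := ⟨EuclideanSpace.single (⟨1, by omega⟩ : Fin (d + 1)) 1,
    by simp [EuclideanSpace.norm_single]⟩ with hz
  refine measure_mono_null ?_
    (slice_null z (t := 0) (by constructor <;> norm_num))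
  intro y hy
  rw [Set.mem_singleton_iff] at hy
  subst hy
  show ⟪(z : E), ((basePt d : Sph d) : E)⟫_ℝ = 0
  rw [hz]
  simp [basePt, EuclideanSpace.inner_single_left, EuclideanSpace.single_apply, hj]

end SphAux

open SphAux

/-- If `D : (0,φ₀] → [1,∞)` is continuous and decreasing and for
every `φ ∈ (0,φ₀]` there is a cover of `S^d` by finitely many caps of radius `φ`
with density at most `D(φ)`, then `n·disp_C(n,d) ≤ D(φ(n))` for all
`n ≥ D(φ₀)/V(φ₀)`. -/
theorem minCapDisp_le_of_covers (d : ℕ) (hd : 2 ≤ d) (φ₀ : ℝ)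
    (hφ₀ : φ₀ ∈ Set.Ioc (0 : ℝ) (π / 2)) (D : ℝ → ℝ)
    (hcont : ContinuousOn D (Set.Ioc 0 φ₀))
    (hanti : AntitoneOn D (Set.Ioc 0 φ₀))
    (hone : ∀ φ ∈ Set.Ioc (0 : ℝ) φ₀, 1 ≤ D φ)
    (hcover : ∀ φ ∈ Set.Ioc (0 : ℝ) φ₀, ∃ (m : ℕ) (x : Fin m → Sph d),
      (⋃ i, cap (x i) φ) = Set.univ ∧
      ∑ i : Fin m, (sphMeasure d (cap (x i) φ)).toReal ≤ D φ) :
    ∀ n : ℕ, D φ₀ / capVol d φ₀ ≤ (n : ℝ) →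
      (n : ℝ) * minCapDisp d n ≤ D (covRad d n) := by
  intro n hn
  obtain ⟨hφ₀pos, hφ₀le⟩ := hφ₀
  set S : Set ℝ :=
    {φ : ℝ | 0 < φ ∧ ∃ x : Fin n → Sph d, (⋃ i, cap (x i) φ) = Set.univ} with hSdef
  have hτdef : covRad d n = sInf S := rfl
  -- facts about φ₀-cover
  obtain ⟨m₀, xs₀, hxs₀, hd₀⟩ := hcover φ₀ ⟨hφ₀pos, le_rfl⟩
  have hV₀pos : 0 < capVol d φ₀ := by
    have h1 : (1 : ℝ) ≤ (m₀ : ℝ) * capVol d φ₀ := cover_ineq xs₀ hxs₀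
    rcases lt_or_ge 0 (capVol d φ₀) with h | h
    · exact h
    · have h0 : capVol d φ₀ = 0 := le_antisymm h (capVol_nonneg φ₀)
      rw [h0, mul_zero] at h1
      linarith
  have hm₀pos : 0 < m₀ := by
    rcases Nat.eq_zero_or_pos m₀ with rfl | h
    · exfalso
      have hmem : (basePt d) ∈ (⋃ i : Fin 0, cap (xs₀ i) φ₀) := hxs₀ ▸ Set.mem_univ _
      simpa using hmem
    · exact h
  have hm₀n : m₀ ≤ n := by
    have h2 : (m₀ : ℝ) * capVol d φ₀ ≤ D φ₀ := by
      rw [← cover_sum_eq]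
      exact hd₀
    have h3 : (m₀ : ℝ) ≤ D φ₀ / capVol d φ₀ := (le_div_iff₀ hV₀pos).mpr h2
    exact_mod_cast h3.trans hn
  have hφ₀S : φ₀ ∈ S := by
    obtain ⟨x', hx'⟩ := extend_cover hm₀n hm₀pos xs₀ hxs₀
    exact ⟨hφ₀pos, x', hx'⟩
  have hSne : S.Nonempty := ⟨φ₀, hφ₀S⟩
  have hSbdd : BddBelow S := ⟨0, fun ψ hψ => hψ.1.le⟩
  have hτle : covRad d n ≤ φ₀ := by
    rw [hτdef]
    exact csInf_le hSbdd hφ₀S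
  -- n ≥ 1
  have hn1 : (1 : ℝ) ≤ (n : ℝ) := by
    refine le_trans ?_ hn
    rw [le_div_iff₀ hV₀pos, one_mul]
    exact le_trans (capVol_le_one φ₀) (hone φ₀ ⟨hφ₀pos, le_rfl⟩)
  have hnpos : (0 : ℝ) < n := by linarith
  -- covering radius is positive
  have hτpos : 0 < covRad d n := by
    have hcap0 : capVol d 0 = 0 := by
      rw [capVol_def, cap_zero, basePt_singleton_null (by omega), ENNReal.toReal_zero]
    have hlim := tendsto_capVol_right (d := d) 0
    rw [hcap0] at hlim
    have hev : ∀ᶠ k : ℕ in atTop, capVol d (0 + 1 / ((k : ℝ) + 1)) < 1 / n :=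
      hlim.eventually_lt_const (by positivity)
    obtain ⟨k₀, hk₀⟩ := hev.exists
    have hlb : ∀ ψ ∈ S, 1 / ((k₀ : ℝ) + 1) ≤ ψ := by
      intro ψ hψ
      by_contra hcon
      push_neg at hcon
      obtain ⟨xψ, hxψ⟩ := hψ.2
      have h1 : (1 : ℝ) ≤ (n : ℝ) * capVol d ψ := cover_ineq xψ hxψ
      have h2 : capVol d ψ ≤ capVol d (0 + 1 / ((k₀ : ℝ) + 1)) :=
        capVol_mono (by linarith)
      have h3 : (n : ℝ) * capVol d ψ < (n : ℝ) * (1 / n) := by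
        apply mul_lt_mul_of_pos_left (lt_of_le_of_lt h2 hk₀) hnpos
      rw [mul_one_div, div_self (ne_of_gt hnpos)] at h3
      linarith
    have : 1 / ((k₀ : ℝ) + 1) ≤ sInf S := le_csInf hSne hlb
    rw [hτdef]
    have hp : (0 : ℝ) < 1 / ((k₀ : ℝ) + 1) := by positivity
    linarith
  set τ := covRad d n with hτ
  have hτmem : τ ∈ Set.Ioc (0 : ℝ) φ₀ := ⟨hτpos, hτle⟩
  have hτpi2 : τ ≤ π / 2 := le_trans hτle hφ₀le
  -- Step 3 : n · V(ψ) ≤ D(ψ) for 0 < ψ < τ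
  have step3 : ∀ ψ : ℝ, 0 < ψ → ψ < τ → (n : ℝ) * capVol d ψ ≤ D ψ := by
    intro ψ h0 hlt
    have hψφ₀ : ψ ≤ φ₀ := le_trans hlt.le hτle
    obtain ⟨m, xs, hxs, hdm⟩ := hcover ψ ⟨h0, hψφ₀⟩
    have hmpos : 0 < m := by
      rcases Nat.eq_zero_or_pos m with rfl | h
      · exfalso
        have hmem : (basePt d) ∈ (⋃ i : Fin 0, cap (xs i) ψ) := hxs ▸ Set.mem_univ _
        simpa using hmem
      · exact h
    have hnm : n < m := by
      by_contra hcon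
      push_neg at hcon
      obtain ⟨x', hx'⟩ := extend_cover hcon hmpos xs hxs
      have hτψ : τ ≤ ψ := hτdef.trans_le (csInf_le hSbdd ⟨h0, x', hx'⟩)
      linarith
    have h2 : (m : ℝ) * capVol d ψ ≤ D ψ := by
      rw [← cover_sum_eq]
      exact hdm
    have h3 : (n : ℝ) * capVol d ψ ≤ (m : ℝ) * capVol d ψ :=
      mul_le_mul_of_nonneg_right (by exact_mod_cast hnm.le) (capVol_nonneg _)
    linarith
  -- Step 4 : n · V(τ) ≤ D(τ)
  have hseq : ∀ k : ℕ, 0 < τ - τ / ((k : ℝ) + 2) ∧ τ - τ / ((k : ℝ) + 2) < τ := by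
    intro k
    have hq : 0 < τ / ((k : ℝ) + 2) := by positivity
    have hq2 : τ / ((k : ℝ) + 2) < τ := by
      rw [div_lt_iff₀ (by positivity)]
      nlinarith
    exact ⟨by linarith, by linarith⟩
  have hDlim : Tendsto (fun k : ℕ => D (τ - τ / ((k : ℝ) + 2))) atTop (𝓝 (D τ)) := by
    have htend : Tendsto (fun k : ℕ => τ - τ / ((k : ℝ) + 2)) atTop (𝓝 τ) := by
      have h0 : Tendsto (fun k : ℕ => τ / ((k : ℝ) + 2)) atTop (𝓝 0) :=
        Filter.Tendsto.div_atTop tendsto_const_nhds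
          (tendsto_atTop_add_const_right atTop 2 tendsto_natCast_atTop_atTop)
      simpa using tendsto_const_nhds.sub h0
    exact (hcont τ hτmem).tendsto.comp (tendsto_nhdsWithin_iff.mpr
      ⟨htend, Filter.Eventually.of_forall fun k =>
        ⟨(hseq k).1, le_trans (hseq k).2.le hτle⟩⟩)
  have hVlim : Tendsto (fun k : ℕ => (n : ℝ) * capVol d (τ - τ / ((k : ℝ) + 2))) atTop
      (𝓝 ((n : ℝ) * capVol d τ)) :=
    (tendsto_capVol_left hτpos hτpi2).const_mul _
  have step4 : (n : ℝ) * capVol d τ ≤ D τ :=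
    le_of_tendsto_of_tendsto' hVlim hDlim fun k => step3 _ (hseq k).1 (hseq k).2
  -- Step 5/6 : n · minCapDisp ≤ n · V(τ)
  have step6 : ∀ k : ℕ, minCapDisp d n ≤ capVol d (τ + 1 / ((k : ℝ) + 1)) := by
    intro k
    obtain ⟨ψ, hψS, hψlt⟩ :=
      Real.lt_sInf_add_pos hSne (show (0 : ℝ) < 1 / ((k : ℝ) + 1) by positivity)
    obtain ⟨xψ, hxψ⟩ := hψS.2
    refine le_trans (minCapDisp_le xψ hxψ) (capVol_mono ?_)
    have heq : sInf S + 1 / ((k : ℝ) + 1) = τ + 1 / ((k : ℝ) + 1) := by rw [hτdef]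
    exact hψlt.le.trans heq.le
  have step7 : minCapDisp d n ≤ capVol d τ :=
    ge_of_tendsto' (tendsto_capVol_right τ) step6
  calc (n : ℝ) * minCapDisp d n
      ≤ (n : ℝ) * capVol d τ := mul_le_mul_of_nonneg_left step7 (by positivity)
    _ ≤ D τ := step4
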